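/- arXiv:2206.11729 — 2 statements merged into one kernel-verified Lean document; each statement's English description precedes it below -/
import Mathlib

section
/- Let z_k = σ_k + i t_k for k = 1,…,r be complex numbers with 1/2 ≤ σ ≤ σ_k ≤ 1 for all k. Then for any finitely supported sequence of complex numbers (a_n), ∑_{k=1}^r |∑_n a_n n^{-σ_k - i t_k}| ≤ ∫_0^{1/2} ∑_{k=1}^r ( |∑_n 2 a_n n^{-σ - i t_k}| + |∑_n a_n n^{-σ - i t_k} (log n) n^{-α}| ) dα. -/
open Complex Real Set

private lemma cont_rpow {x : ℝ} (hx : 0 < x) : Continuous fun α : ℝ => x ^ α :=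
  continuous_iff_continuousAt.2 fun b => Real.continuousAt_const_rpow hx.ne' (b := b)

private lemma lemA {x : ℝ} (hx : 0 < x) (δ : ℝ) :
    ∫ α in (0:ℝ)..δ, Real.log x / x ^ α = 1 - x ^ (-δ) := by
  have key : ∀ α : ℝ, HasDerivAt (fun α : ℝ => -(x ^ (-α)))
      (Real.log x / x ^ α) α := by
    intro α
    have h1 : HasDerivAt (fun α : ℝ => x ^ (-α)) ((x ^ (-α) * Real.log x) * (-1)) α :=
      ((Real.hasStrictDerivAt_const_rpow hx (-α)).hasDerivAt).comp α (hasDerivAt_neg α)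
    have h2 := h1.neg
    refine h2.congr_deriv ?_
    rw [Real.rpow_neg hx.le]
    field_simp
  have hint : IntervalIntegrable (fun α : ℝ => Real.log x / x ^ α) MeasureTheory.volume 0 δ :=
    (continuous_const.div (cont_rpow hx) (fun α => (Real.rpow_pos_of_pos hx α).ne')).intervalIntegrable _ _
  rw [intervalIntegral.integral_eq_sub_of_hasDerivAt (fun t _ => key t) hint]
  simp [Real.rpow_neg hx.le]; ring

/-- Replacing evaluation of a Dirichlet polynomial at points with varying real parts
`σ_k ≥ σ` by averaged evaluations on the line `Re(s) = σ`. -/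
theorem dirichlet_varying_real_parts
    (r : ℕ) (σ : ℝ) (σk t : Fin r → ℝ)
    (hσ : 1 / 2 ≤ σ) (hσk : ∀ k, σ ≤ σk k) (hσk1 : ∀ k, σk k ≤ 1)
    (S : Finset ℕ) (hS : ∀ n ∈ S, 0 < n) (a : ℕ → ℂ) :
    ∑ k : Fin r, ‖∑ n ∈ S, a n * (n : ℂ) ^ (-((σk k : ℂ) + Complex.I * t k))‖
      ≤ ∫ α in (0:ℝ)..(1/2), ∑ k : Fin r,
          (‖∑ n ∈ S, 2 * a n * (n : ℂ) ^ (-((σ : ℂ) + Complex.I * t k))‖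
            + ‖∑ n ∈ S,
                a n * (n : ℂ) ^ (-((σ : ℂ) + Complex.I * t k)) *
                  ((Real.log n / (n : ℝ) ^ α : ℝ) : ℂ)‖) := by
  set F : Fin r → ℂ := fun k => ∑ n ∈ S, a n * (n : ℂ) ^ (-((σ : ℂ) + Complex.I * t k)) with hF
  set g : Fin r → ℝ → ℂ := fun k α => ∑ n ∈ S,
      a n * (n : ℂ) ^ (-((σ : ℂ) + Complex.I * t k)) * ((Real.log n / (n : ℝ) ^ α : ℝ) : ℂ)
    with hg
  have hgc : ∀ k, Continuous (g k) := by
    intro k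
    refine continuous_finset_sum _ fun n hn => ?_
    exact continuous_const.mul (Complex.continuous_ofReal.comp
      (continuous_const.div (cont_rpow (by exact_mod_cast hS n hn))
        (fun α => (Real.rpow_pos_of_pos (by exact_mod_cast hS n hn) α).ne')))
  have hga : ∀ k, Continuous fun α => ‖g k α‖ := fun k =>
    continuous_norm.comp (hgc k)
  -- Step 1: key identity
  have key : ∀ k, (∑ n ∈ S, a n * (n : ℂ) ^ (-((σk k : ℂ) + Complex.I * t k)))
      = F k - ∫ α in (0:ℝ)..(σk k - σ), g k α := by
    intro k
    have hswap : (∫ α in (0:ℝ)..(σk k - σ), g k α)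
        = ∑ n ∈ S, ∫ α in (0:ℝ)..(σk k - σ),
            a n * (n : ℂ) ^ (-((σ : ℂ) + Complex.I * t k)) * ((Real.log n / (n : ℝ) ^ α : ℝ) : ℂ) := by
      rw [hg]
      exact intervalIntegral.integral_finset_sum fun n hn =>
        (continuous_const.mul (Complex.continuous_ofReal.comp
          (continuous_const.div (cont_rpow (by exact_mod_cast hS n hn))
            (fun α => (Real.rpow_pos_of_pos (by exact_mod_cast hS n hn) α).ne')))).intervalIntegrable _ _
    rw [hswap, hF, ← Finset.sum_sub_distrib]
    refine Finset.sum_congr rfl fun n hn => ?_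
    have hn0 : (0:ℝ) < (n:ℝ) := by exact_mod_cast hS n hn
    have hnc : (n : ℂ) ≠ 0 := by exact_mod_cast (hS n hn).ne'
    rw [intervalIntegral.integral_const_mul, intervalIntegral.integral_ofReal, lemA hn0]
    have hsplit : (n : ℂ) ^ (-((σk k : ℂ) + Complex.I * t k))
        = (n : ℂ) ^ (-((σ : ℂ) + Complex.I * t k)) * (n : ℂ) ^ (((-(σk k - σ) : ℝ)) : ℂ) := by
      rw [← Complex.cpow_add _ _ hnc]
      congr 1
      push_cast
      ring
    rw [hsplit]
    have hcast : (n : ℂ) ^ (((-(σk k - σ) : ℝ)) : ℂ) = (((n:ℝ) ^ (-(σk k - σ)) : ℝ) : ℂ) := by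
      rw [Complex.ofReal_cpow hn0.le]
      norm_cast
    rw [hcast]
    push_cast
    ring
  -- Step 2: per-k bound
  have bound : ∀ k, ‖∑ n ∈ S, a n * (n : ℂ) ^ (-((σk k : ℂ) + Complex.I * t k))‖
      ≤ ‖F k‖ + ∫ α in (0:ℝ)..(1/2), ‖g k α‖ := by
    intro k
    rw [key k]
    have h1 : ‖F k - ∫ α in (0:ℝ)..(σk k - σ), g k α‖
        ≤ ‖F k‖ + ‖∫ α in (0:ℝ)..(σk k - σ), g k α‖ := by
      simpa using norm_sub_le (F k) (∫ α in (0:ℝ)..(σk k - σ), g k α)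
    refine h1.trans (add_le_add_right ?_ _)
    have hδ0 : (0:ℝ) ≤ σk k - σ := sub_nonneg.2 (hσk k)
    have hδh : σk k - σ ≤ 1/2 := by have := hσk1 k; linarith
    have h2 : ‖∫ α in (0:ℝ)..(σk k - σ), g k α‖
        ≤ ∫ α in (0:ℝ)..(σk k - σ), ‖g k α‖ := by
      simpa using
        intervalIntegral.norm_integral_le_integral_norm (f := g k) (μ := MeasureTheory.volume) hδ0
    refine h2.trans ?_
    have hi1 : IntervalIntegrable (fun α => ‖g k α‖) MeasureTheory.volume 0 (σk k - σ) :=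
      (hga k).intervalIntegrable _ _
    have hi2 : IntervalIntegrable (fun α => ‖g k α‖) MeasureTheory.volume (σk k - σ) (1/2) :=
      (hga k).intervalIntegrable _ _
    rw [← intervalIntegral.integral_add_adjacent_intervals hi1 hi2]
    have : (0:ℝ) ≤ ∫ α in (σk k - σ)..(1/2), ‖g k α‖ :=
      intervalIntegral.integral_nonneg hδh (fun x _ => norm_nonneg _)
    linarith
  -- Step 3: rewrite RHS
  have habsF : ∀ k, ‖∑ n ∈ S, 2 * a n * (n : ℂ) ^ (-((σ : ℂ) + Complex.I * t k))‖
      = 2 * ‖F k‖ := by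
    intro k
    have h2 : (∑ n ∈ S, 2 * a n * (n : ℂ) ^ (-((σ : ℂ) + Complex.I * t k))) = 2 * F k := by
      rw [hF, Finset.mul_sum]
      exact Finset.sum_congr rfl fun n _ => by ring
    rw [h2, norm_mul]
    norm_num
  have hRHS : (∫ α in (0:ℝ)..(1/2), ∑ k : Fin r,
          (‖∑ n ∈ S, 2 * a n * (n : ℂ) ^ (-((σ : ℂ) + Complex.I * t k))‖
            + ‖g k α‖))
      = ∑ k : Fin r, (‖F k‖ + ∫ α in (0:ℝ)..(1/2), ‖g k α‖) := by
    rw [intervalIntegral.integral_finset_sum]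
    · refine Finset.sum_congr rfl fun k _ => ?_
      rw [intervalIntegral.integral_add intervalIntegrable_const
        ((hga k).intervalIntegrable _ _),
        intervalIntegral.integral_const, habsF k, smul_eq_mul]
      ring
    · intro k _
      exact intervalIntegrable_const.add ((hga k).intervalIntegrable _ _)
  calc ∑ k : Fin r, ‖∑ n ∈ S, a n * (n : ℂ) ^ (-((σk k : ℂ) + Complex.I * t k))‖
      ≤ ∑ k : Fin r, (‖F k‖ + ∫ α in (0:ℝ)..(1/2), ‖g k α‖) :=
        Finset.sum_le_sum fun k _ => bound k
    _ = _ := hRHS.symm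
end

section
/- Let A > 0 and k a positive integer, and set R = 12^k. There exist real numbers θ₁,…,θ_R (with repetitions allowed) such that for all t ∈ [A, 2A], |∑_{r=1}^R exp(i t θ_r)| ≤ 4^{-k} = R^{-log 4 / log 12}. -/
open Complex Real Set

noncomputable def bPhi (c : ℝ) : Fin 12 → ℝ :=
  ![2*c, c, c, c, 0, 0, 0, 0, -c, -c, -c, -2*c]

lemma sum_base (c t : ℝ) :
    ∑ j, Complex.exp (Complex.I * t * bPhi c j)
      = 2 * Complex.cos (2*(t*c)) + 6 * Complex.cos (t*c) + 4 := by
  simp only [Fin.sum_univ_succ, bPhi, Complex.cos]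
  simp only [Matrix.cons_val_zero, Matrix.cons_val_one, Matrix.head_cons,
    Matrix.cons_val_succ, Fin.sum_univ_zero]
  push_cast
  rw [mul_zero, Complex.exp_zero]
  ring_nf

lemma cos_bound {x : ℝ} (h1 : 2 * π / 3 ≤ x) (h2 : x ≤ 4 * π / 3) :
    Real.cos x ≤ -(1/2) := by
  have hπ := Real.pi_pos
  have hu : Real.cos (x / 2) ≤ 1 / 2 := by
    have := Real.cos_le_cos_of_nonneg_of_le_pi (x := π/3) (y := x/2)
      (by positivity) (by linarith) (by linarith)
    rwa [Real.cos_pi_div_three] at this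
  have hl : -(1/2) ≤ Real.cos (x / 2) := by
    have h3 : Real.cos (2 * π / 3) = -(1/2) := by
      have : (2:ℝ) * π / 3 = π - π/3 := by ring
      rw [this, Real.cos_pi_sub, Real.cos_pi_div_three]
    have := Real.cos_le_cos_of_nonneg_of_le_pi (x := x/2) (y := 2*π/3)
      (by linarith) (by linarith) (by linarith)
    rwa [h3] at this
  have hx : Real.cos x = 2 * Real.cos (x/2) ^ 2 - 1 := by
    have := Real.cos_two_mul (x/2)
    rwa [show 2 * (x/2) = x by ring] at this
  nlinarith

lemma base_abs_le {c t : ℝ} (h1 : 2 * π / 3 ≤ t * c) (h2 : t * c ≤ 4 * π / 3) :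
    ‖∑ j, Complex.exp (Complex.I * t * bPhi c j)‖ ≤ 1/4 := by
  rw [sum_base]
  have : (2 * Complex.cos (2*(t*c)) + 6 * Complex.cos (t*c) + 4 : ℂ)
      = ((2 * Real.cos (2*(t*c)) + 6 * Real.cos (t*c) + 4 : ℝ) : ℂ) := by
    push_cast [Complex.ofReal_cos]
    ring
  rw [this, Complex.norm_real, Real.norm_eq_abs]
  have hc1 : Real.cos (t*c) ≤ -(1/2) := cos_bound h1 h2
  have hc2 : -1 ≤ Real.cos (t*c) := Real.neg_one_le_cos _
  rw [Real.cos_two_mul]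
  rw [abs_le]
  constructor <;> nlinarith [sq_nonneg (2*Real.cos (t*c) + 3/2)]

/-- Bourgain's example: for `R = 12^k` there are angles `θ₁,…,θ_R` whose exponential sum
is at most `4^{-k} = R^{-log 4 / log 12}` uniformly on `[A, 2A]`. -/
theorem bourgain_example (A : ℝ) (hA : 0 < A) (k : ℕ) (hk : 0 < k) :
    (∃ θ : Fin (12 ^ k) → ℝ, ∀ t ∈ Set.Icc A (2 * A),
        ‖∑ r, Complex.exp (Complex.I * t * θ r)‖ ≤ ((4:ℝ) ^ k)⁻¹)
    ∧ ((4:ℝ) ^ k)⁻¹ = ((12:ℝ) ^ k) ^ (-(Real.log 4 / Real.log 12)) := by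
  constructor
  · set c : ℝ := 2 * π / (3 * A) with hc
    refine ⟨fun r => ∑ i, bPhi c ((finFunctionFinEquiv.symm r) i), ?_⟩
    intro t ht
    have key : (∑ r : Fin (12^k),
          Complex.exp (Complex.I * t * ∑ i, bPhi c ((finFunctionFinEquiv.symm r) i)))
        = (∑ j, Complex.exp (Complex.I * t * bPhi c j)) ^ k := by
      rw [← Equiv.sum_comp (finFunctionFinEquiv (m := 12) (n := k))
        (fun r => Complex.exp (Complex.I * t * ∑ i, bPhi c ((finFunctionFinEquiv.symm r) i)))]
      simp only [Equiv.symm_apply_apply]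
      have : ∀ v : Fin k → Fin 12,
          Complex.exp (Complex.I * t * ∑ i, bPhi c (v i))
            = ∏ i, Complex.exp (Complex.I * t * bPhi c (v i)) := by
        intro v
        rw [← Complex.exp_sum]
        congr 1
        push_cast
        rw [Finset.mul_sum]
      simp only [this]
      have hps := Finset.prod_univ_sum (fun _ : Fin k => (Finset.univ : Finset (Fin 12)))
        (fun _ j => Complex.exp (Complex.I * t * bPhi c j))
      simp only [Fintype.piFinset_univ] at hps
      rw [← hps]
      simp [Finset.prod_const, Finset.card_univ]
    rw [key, norm_pow]
    have habs : ‖∑ j, Complex.exp (Complex.I * t * bPhi c j)‖ ≤ 1/4 := by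
      apply base_abs_le
      · have e1 : A * (2 * π / (3 * A)) = 2 * π / 3 := by
          field_simp
        rw [hc, ← e1]
        have hπ := Real.pi_pos
        exact mul_le_mul_of_nonneg_right ht.1 (by positivity)
      · have e2 : (2 * A) * (2 * π / (3 * A)) = 4 * π / 3 := by
          field_simp; ring
        rw [hc, ← e2]
        have hπ := Real.pi_pos
        exact mul_le_mul_of_nonneg_right ht.2 (by positivity)
    calc ‖∑ j, Complex.exp (Complex.I * t * bPhi c j)‖ ^ k
        ≤ (1/4 : ℝ)^k := by
          exact pow_le_pow_left₀ (by positivity) habs k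
      _ = ((4:ℝ)^k)⁻¹ := by rw [one_div, inv_pow]
  · have h12 : (0:ℝ) < (12:ℝ)^k := by positivity
    rw [Real.rpow_def_of_pos h12, Real.log_pow]
    have hlog : Real.log 12 ≠ 0 := by
      have := Real.log_pos (by norm_num : (1:ℝ) < 12)
      linarith
    have h : (k:ℝ) * Real.log 12 * -(Real.log 4 / Real.log 12) = -((k:ℝ) * Real.log 4) := by
      field_simp
    rw [h, Real.exp_neg, Real.exp_nat_mul, Real.exp_log (by norm_num : (0:ℝ) < 4)]
end
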